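/- For all integers 1 ≤ n ≤ m, c(n,m,n−1) equals: (1/4)·(n+m)!/((n−1)!(m−1)!)·(α₀+α₁) if n and m are both even; (1/4)·(n+m)!/(n!·m!)·((1+nm)·α₀ + (−1+nm)·α₁) if n and m are both odd; (1/4)·(n+m−1)!/((n−1)!·m!)·((−1+nm+m²)·α₀ + (1+nm+m²)·α₁) if n is even and m is odd; (1/4)·(n+m−1)!/(n!·(m−1)!)·((−1+nm+n²)·α₀ + (1+nm+n²)·α₁) if n is odd and m is even. -/
import Mathlib


open MvPolynomial Finset

/-- The equivariant Chevalley coefficient `q_j = ⌈j/2⌉²·α₀ + (⌊j/2⌋² + ⌊j/2⌋)·α₁`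
in `ℚ[α₀, α₁]`, with `α₀ = X 0` and `α₁ = X 1`. -/
noncomputable def q (j : ℕ) : MvPolynomial (Fin 2) ℚ :=
  C ((((j + 1) / 2 : ℕ) : ℚ) ^ 2) * X 0 +
    C ((((j / 2 : ℕ) : ℚ)) ^ 2 + (((j / 2 : ℕ) : ℚ))) * X 1

/-- `hsum d s x` is the complete homogeneous symmetric polynomial of degree `d` in the
variables `x i`, `i ∈ s`: the sum of all monomials of degree `d` in these variables
(with `hsum 0 s x = 1`). -/
def hsum {R : Type*} [CommSemiring R] (d : ℕ) (s : Finset ℕ) (x : ℕ → R) : R :=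
  ∑ μ ∈ s.sym d, ((μ : Multiset ℕ).map x).prod

lemma hsum_zero {R : Type*} [CommSemiring R] (s : Finset ℕ) (x : ℕ → R) : hsum 0 s x = 1 := by
  simp only [hsum, Finset.sym_zero, Finset.sum_singleton]
  rfl

lemma mem_oneEquiv {α : Type*} (a : α) : a ∈ Sym.oneEquiv a := by
  simp [Sym.oneEquiv_apply, Sym.mem_mk]

lemma hsum_one {R : Type*} [CommSemiring R] (s : Finset ℕ) (x : ℕ → R) :
    hsum 1 s x = ∑ j ∈ s, x j := by
  unfold hsum
  refine Finset.sum_nbij' (fun μ => Sym.oneEquiv.symm μ) (fun j => Sym.oneEquiv j) ?_ ?_ ?_ ?_ ?_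
  · intro μ hμ
    obtain ⟨b, rfl⟩ : ∃ b, μ = Sym.oneEquiv b := ⟨_, (Equiv.apply_symm_apply _ _).symm⟩
    simp only [Equiv.symm_apply_apply]
    exact Finset.mem_sym_iff.mp hμ _ (mem_oneEquiv b)
  · intro j hj
    rw [Finset.mem_sym_iff]
    intro a ha
    have : a = j := by simpa [Sym.oneEquiv_apply, Sym.mem_mk] using ha
    rwa [this]
  · intro μ _; exact Equiv.apply_symm_apply _ _
  · intro j _; exact Equiv.symm_apply_apply _ _
  · intro μ hμ
    obtain ⟨b, rfl⟩ : ∃ b, μ = Sym.oneEquiv b := ⟨_, (Equiv.apply_symm_apply _ _).symm⟩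
    simp only [Equiv.symm_apply_apply]
    simp [Sym.oneEquiv_apply]

/-- Coefficient of `X 0` in `q j`. -/
def fA (j : ℕ) : ℚ := (((j + 1) / 2 : ℕ) : ℚ) ^ 2

/-- Coefficient of `X 1` in `q j`. -/
def fB (j : ℕ) : ℚ := (((j / 2 : ℕ) : ℚ)) ^ 2 + ((j / 2 : ℕ) : ℚ)

lemma q_eq (j : ℕ) : q j = C (fA j) * X 0 + C (fB j) * X 1 := rfl

lemma fA_eval (j t : ℕ) (h : (j + 1) / 2 = t) : fA j = (t : ℚ) ^ 2 := by rw [fA, h]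

lemma fB_eval (j t : ℕ) (h : j / 2 = t) : fB j = (t : ℚ) ^ 2 + t := by rw [fB, h]

/-- Prefix sums of `fA`. -/
def SA (N : ℕ) : ℚ := ∑ j ∈ Ioc 0 N, fA j

/-- Prefix sums of `fB`. -/
def SB (N : ℕ) : ℚ := ∑ j ∈ Ioc 0 N, fB j

lemma SA_zero : SA 0 = 0 := by simp [SA]

lemma SB_zero : SB 0 = 0 := by simp [SB]

lemma SA_succ (N : ℕ) : SA (N + 1) = SA N + fA (N + 1) := by
  rw [SA, SA, Finset.sum_Ioc_succ_top (Nat.zero_le _)]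

lemma SB_succ (N : ℕ) : SB (N + 1) = SB N + fB (N + 1) := by
  rw [SB, SB, Finset.sum_Ioc_succ_top (Nat.zero_le _)]

lemma SA_even (t : ℕ) : SA (2 * t) = (t : ℚ) * (t + 1) * (2 * t + 1) / 3 := by
  induction t with
  | zero => simpa using SA_zero
  | succ t ih =>
    rw [show 2 * (t + 1) = 2 * t + 1 + 1 by ring, SA_succ, SA_succ, ih,
      fA_eval (2 * t + 1) (t + 1) (by omega), fA_eval (2 * t + 1 + 1) (t + 1) (by omega)]
    push_cast
    ring

lemma SA_odd (t : ℕ) : SA (2 * t + 1) = (t : ℚ) * (t + 1) * (2 * t + 1) / 3 + (t + 1) ^ 2 := by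
  rw [SA_succ, SA_even, fA_eval (2 * t + 1) (t + 1) (by omega)]
  push_cast
  ring

lemma SB_even (t : ℕ) : SB (2 * t) = (t : ℚ) * (t + 1) * (2 * t + 1) / 3 := by
  induction t with
  | zero => simpa using SB_zero
  | succ t ih =>
    rw [show 2 * (t + 1) = 2 * t + 1 + 1 by ring, SB_succ, SB_succ, ih,
      fB_eval (2 * t + 1) t (by omega), fB_eval (2 * t + 1 + 1) (t + 1) (by omega)]
    push_cast
    ring

lemma SB_odd (t : ℕ) : SB (2 * t + 1) = (t : ℚ) * (t + 1) * (2 * t + 1) / 3 + (t : ℚ) * (t + 1) := by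
  rw [SB_succ, SB_even, fB_eval (2 * t + 1) t (by omega)]
  ring

lemma qsum (a b : ℕ) (hab : a ≤ b) :
    ∑ j ∈ Ioc a b, q j = C (SA b - SA a) * X 0 + C (SB b - SB a) * X 1 := by
  have hA : SA a + ∑ j ∈ Ioc a b, fA j = SA b := Finset.sum_Ioc_consecutive _ (Nat.zero_le a) hab
  have hB : SB a + ∑ j ∈ Ioc a b, fB j = SB b := Finset.sum_Ioc_consecutive _ (Nat.zero_le a) hab
  have hA' : ∑ j ∈ Ioc a b, fA j = SA b - SA a := by linarith
  have hB' : ∑ j ∈ Ioc a b, fB j = SB b - SB a := by linarith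
  calc ∑ j ∈ Ioc a b, q j = ∑ j ∈ Ioc a b, (C (fA j) * X 0 + C (fB j) * X 1) := by
        exact Finset.sum_congr rfl fun j _ => q_eq j
    _ = (∑ j ∈ Ioc a b, C (fA j)) * X 0 + (∑ j ∈ Ioc a b, C (fB j)) * X 1 := by
        rw [Finset.sum_add_distrib, Finset.sum_mul, Finset.sum_mul]
    _ = C (SA b - SA a) * X 0 + C (SB b - SB a) * X 1 := by
        rw [← map_sum, ← map_sum, hA', hB']

lemma factdiv (m i : ℕ) :
    (((m + i).factorial / m.factorial : ℕ) : ℚ) = ((m + i).factorial : ℚ) / (m.factorial : ℚ) :=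
  Nat.cast_div_charZero (Nat.factorial_dvd_factorial (Nat.le_add_right m i))

lemma hX (p r p' r' : ℚ) (h0 : p = p') (h1 : r = r') :
    (C p * X 0 + C r * X 1 : MvPolynomial (Fin 2) ℚ) = C p' * X 0 + C r' * X 1 := by
  rw [h0, h1]

lemma shape1 (k : ℚ) : (C k * (X 0 + X 1) : MvPolynomial (Fin 2) ℚ) = C k * X 0 + C k * X 1 := by
  ring

lemma shape2 (k u v : ℚ) : (C k * (C u * X 0 + C v * X 1) : MvPolynomial (Fin 2) ℚ)
    = C (k * u) * X 0 + C (k * v) * X 1 := by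
  rw [map_mul, map_mul]; ring

lemma keylin (u v w f a1 b1 a2 b2 : ℚ) :
    (C u * (C v * (C a1 * X 0 + C b1 * X 1)
        - C w * (C a2 * X 0 + C b2 * X 1) * C f) : MvPolynomial (Fin 2) ℚ)
      = C (u * (v * a1 - w * a2 * f)) * X 0 + C (u * (v * b1 - w * b2 * f)) * X 1 := by
  simp only [map_mul, map_sub]
  ring

section withC

variable (c : ℕ → ℕ → ℕ → MvPolynomial (Fin 2) ℚ)
    (hc1 : ∀ m : ℕ, 1 ≤ m → c 1 m 0 = q m)
    (hc2 : ∀ m : ℕ, 1 ≤ m → c 1 m 1 = C ((m : ℚ) + 1))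
    (hcrec : ∀ n m i : ℕ, 2 ≤ n → n ≤ m → i ≤ n →
      c n m i = C ((n.factorial : ℚ)⁻¹) *
        (C ((((m + i).factorial / m.factorial : ℕ) : ℚ)) * hsum (n - i) (Icc m (m + i)) q
          - ∑ k ∈ Icc (max i 1) (n - 1),
              C ((k.factorial : ℕ) : ℚ) * hsum (n - k) (Icc 1 k) q * c k m i))

include hc2 hcrec in
lemma ckk (k m : ℕ) (hk : 1 ≤ k) (hkm : k ≤ m) :
    c k m k = C (((m + k).factorial : ℚ) / ((m.factorial : ℚ) * (k.factorial : ℚ))) := by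
  have h4 : (m.factorial : ℚ) ≠ 0 := Nat.cast_ne_zero.mpr (Nat.factorial_ne_zero _)
  have h5 : (k.factorial : ℚ) ≠ 0 := Nat.cast_ne_zero.mpr (Nat.factorial_ne_zero _)
  rcases eq_or_lt_of_le hk with h1 | h2
  · subst h1
    rw [hc2 m (hk.trans hkm)]
    congr 1
    have e1 : ((m + 1).factorial : ℚ) = (m + 1) * m.factorial := by
      rw [Nat.factorial_succ]; push_cast; ring
    rw [e1, Nat.factorial_one, Nat.cast_one, mul_one]
    rw [eq_div_iff h4]
  · rw [hcrec k m k h2 hkm le_rfl]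
    rw [Nat.sub_self, hsum_zero, max_eq_left hk, Finset.Icc_eq_empty (by omega),
      Finset.sum_empty, sub_zero, mul_one, ← map_mul, factdiv]
    congr 1
    rw [mul_comm, ← div_eq_mul_inv, div_div]

include hc1 hc2 hcrec in
lemma cmain (n m : ℕ) (hn : 1 ≤ n) (hnm : n ≤ m) :
    c n m (n - 1)
      = C (((n + m - 1).factorial : ℚ) / ((m.factorial : ℚ) * (n.factorial : ℚ))
            * (SA (n + m - 1) - SA (m - 1) - SA (n - 1))) * X 0
        + C (((n + m - 1).factorial : ℚ) / ((m.factorial : ℚ) * (n.factorial : ℚ))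
            * (SB (n + m - 1) - SB (m - 1) - SB (n - 1))) * X 1 := by
  rcases eq_or_lt_of_le hn with h1 | h2
  · -- n = 1
    obtain ⟨m', rfl⟩ : ∃ m', m = m' + 1 := ⟨m - 1, by omega⟩
    subst h1
    rw [hc1 _ (by omega)]
    simp only [show 1 + (m' + 1) - 1 = m' + 1 by omega, Nat.add_sub_cancel, Nat.sub_self]
    rw [SA_succ, SB_succ, SA_zero, SB_zero, q_eq]
    rw [show ((m' + 1).factorial : ℚ) / (((m' + 1).factorial : ℚ) * ((Nat.factorial 1 : ℕ) : ℚ))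
        = 1 by
      rw [Nat.factorial_one, Nat.cast_one, mul_one,
        div_self (Nat.cast_ne_zero.mpr (Nat.factorial_ne_zero _))]]
    refine hX _ _ _ _ ?_ ?_ <;> ring
  · -- n ≥ 2
    obtain ⟨n', rfl⟩ : ∃ n', n = n' + 2 := ⟨n - 2, by omega⟩
    obtain ⟨m', rfl⟩ : ∃ m', m = m' + 1 := ⟨m - 1, by omega⟩
    have hkm : n' + 1 ≤ m' + 1 := by omega
    rw [hcrec (n' + 2) (m' + 1) (n' + 2 - 1) (by omega) hnm (by omega)]
    simp only [show n' + 2 - 1 = n' + 1 by omega, show m' + 1 + (n' + 1) = m' + n' + 2 by omega,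
      show n' + 2 - (n' + 1) = 1 by omega, max_eq_left (by omega : 1 ≤ n' + 1)]
    rw [Finset.Icc_self, Finset.sum_singleton]
    rw [show n' + 2 - (n' + 1) = 1 by omega]
    rw [ckk c hc2 hcrec (n' + 1) (m' + 1) (by omega) hkm]
    rw [show Icc (m' + 1) (m' + n' + 2) = Ioc m' (m' + n' + 2) from Finset.Icc_add_one_left_eq_Ioc m' _,
      show Icc 1 (n' + 1) = Ioc 0 (n' + 1) from Finset.Icc_add_one_left_eq_Ioc 0 _]
    rw [hsum_one, hsum_one, qsum m' (m' + n' + 2) (by omega), qsum 0 (n' + 1) (by omega)]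
    rw [keylin]
    simp only [show n' + 2 + (m' + 1) - 1 = m' + n' + 2 by omega,
      show m' + 1 - 1 = m' by omega, show n' + 2 - 1 = n' + 1 by omega]
    have fd : (((m' + n' + 2).factorial / (m' + 1).factorial : ℕ) : ℚ)
        = ((m' + n' + 2).factorial : ℚ) / ((m' + 1).factorial : ℚ) := by
      rw [show m' + n' + 2 = m' + 1 + (n' + 1) by omega]; exact factdiv _ _
    rw [fd, show m' + 1 + (n' + 1) = m' + n' + 2 by omega, SA_zero, SB_zero]
    refine hX _ _ _ _ ?_ ?_ <;>
    · have h3 : ((m' + n' + 2).factorial : ℚ) ≠ 0 :=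
        Nat.cast_ne_zero.mpr (Nat.factorial_ne_zero _)
      have h4 : ((m' + 1).factorial : ℚ) ≠ 0 := Nat.cast_ne_zero.mpr (Nat.factorial_ne_zero _)
      have h5 : ((n' + 1).factorial : ℚ) ≠ 0 := Nat.cast_ne_zero.mpr (Nat.factorial_ne_zero _)
      have h6 : ((n' + 2).factorial : ℚ) = (n' + 2) * (n' + 1).factorial := by
        rw [Nat.factorial_succ]; push_cast; ring
      rw [h6]
      field_simp
      ring

end withC

/-- Closed form for the equivariant cohomology structure constant `c^{n+m-1}_{n,m} = c(n,m,n−1)`,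
where `c` is determined by `c(1,m,0) = q_m`, `c(1,m,1) = m+1`, and the recursion
`c(n,m,i) = (1/n!)·[((m+i)!/m!)·h_{n−i}(q_m,…,q_{m+i}) − Σ_{k=max(i,1)}^{n−1} k!·h_{n−k}(q₁,…,q_k)·c(k,m,i)]`. -/
theorem stmt14 (c : ℕ → ℕ → ℕ → MvPolynomial (Fin 2) ℚ)
    (hc1 : ∀ m : ℕ, 1 ≤ m → c 1 m 0 = q m)
    (hc2 : ∀ m : ℕ, 1 ≤ m → c 1 m 1 = C ((m : ℚ) + 1))
    (hcrec : ∀ n m i : ℕ, 2 ≤ n → n ≤ m → i ≤ n →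
      c n m i = C ((n.factorial : ℚ)⁻¹) *
        (C ((((m + i).factorial / m.factorial : ℕ) : ℚ)) * hsum (n - i) (Icc m (m + i)) q
          - ∑ k ∈ Icc (max i 1) (n - 1),
              C ((k.factorial : ℕ) : ℚ) * hsum (n - k) (Icc 1 k) q * c k m i))
    (n m : ℕ) (hn : 1 ≤ n) (hnm : n ≤ m) :
    (Even n ∧ Even m → c n m (n - 1)
        = C ((1 / 4) * ((n + m).factorial : ℚ) / (((n - 1).factorial : ℚ) * ((m - 1).factorial : ℚ)))
            * (X 0 + X 1)) ∧
    (Odd n ∧ Odd m → c n m (n - 1)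
        = C ((1 / 4) * ((n + m).factorial : ℚ) / ((n.factorial : ℚ) * (m.factorial : ℚ)))
            * (C (1 + (n : ℚ) * m) * X 0 + C ((n : ℚ) * m - 1) * X 1)) ∧
    (Even n ∧ Odd m → c n m (n - 1)
        = C ((1 / 4) * ((n + m - 1).factorial : ℚ) / (((n - 1).factorial : ℚ) * (m.factorial : ℚ)))
            * (C ((n : ℚ) * m + (m : ℚ) ^ 2 - 1) * X 0 + C ((n : ℚ) * m + (m : ℚ) ^ 2 + 1) * X 1)) ∧
    (Odd n ∧ Even m → c n m (n - 1)
        = C ((1 / 4) * ((n + m - 1).factorial : ℚ) / ((n.factorial : ℚ) * ((m - 1).factorial : ℚ)))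
            * (C ((n : ℚ) * m + (n : ℚ) ^ 2 - 1) * X 0 + C ((n : ℚ) * m + (n : ℚ) ^ 2 + 1) * X 1)) := by
  have hmain := cmain c hc1 hc2 hcrec n m hn hnm
  refine ⟨?_, ?_, ?_, ?_⟩
  · rintro ⟨⟨a, ha⟩, ⟨b, hb⟩⟩
    obtain ⟨a', rfl⟩ : ∃ a', n = 2 * a' + 2 := ⟨a - 1, by omega⟩
    obtain ⟨b', rfl⟩ : ∃ b', m = 2 * b' + 2 := ⟨b - 1, by omega⟩
    rw [hmain, shape1]
    rw [show 2 * a' + 2 + (2 * b' + 2) - 1 = 2 * (a' + b' + 1) + 1 by omega,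
      show 2 * b' + 2 - 1 = 2 * b' + 1 by omega, show 2 * a' + 2 - 1 = 2 * a' + 1 by omega,
      SA_odd, SA_odd, SA_odd, SB_odd, SB_odd, SB_odd]
    have e1 : ((2 * a' + 2 + (2 * b' + 2)).factorial : ℚ)
        = (2 * a' + 2 * b' + 4) * (2 * (a' + b' + 1) + 1).factorial := by
      rw [show 2 * a' + 2 + (2 * b' + 2) = (2 * (a' + b' + 1) + 1) + 1 by omega,
        Nat.factorial_succ]; push_cast; ring
    have e2 : ((2 * a' + 2).factorial : ℚ) = (2 * a' + 2) * (2 * a' + 1).factorial := by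
      rw [show 2 * a' + 2 = (2 * a' + 1) + 1 by omega, Nat.factorial_succ]; push_cast; ring
    have e3 : ((2 * b' + 2).factorial : ℚ) = (2 * b' + 2) * (2 * b' + 1).factorial := by
      rw [show 2 * b' + 2 = (2 * b' + 1) + 1 by omega, Nat.factorial_succ]; push_cast; ring
    have h3 : ((2 * (a' + b' + 1) + 1).factorial : ℚ) ≠ 0 :=
      Nat.cast_ne_zero.mpr (Nat.factorial_ne_zero _)
    have h4 : ((2 * a' + 1).factorial : ℚ) ≠ 0 := Nat.cast_ne_zero.mpr (Nat.factorial_ne_zero _)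
    have h5 : ((2 * b' + 1).factorial : ℚ) ≠ 0 := Nat.cast_ne_zero.mpr (Nat.factorial_ne_zero _)
    refine hX _ _ _ _ ?_ ?_ <;>
    · rw [e1, e2, e3]
      push_cast
      field_simp
      ring
  · rintro ⟨⟨a, ha⟩, ⟨b, hb⟩⟩
    obtain ⟨a', rfl⟩ : ∃ a', n = 2 * a' + 1 := ⟨a, by omega⟩
    obtain ⟨b', rfl⟩ : ∃ b', m = 2 * b' + 1 := ⟨b, by omega⟩
    rw [hmain, shape2]
    rw [show 2 * a' + 1 + (2 * b' + 1) - 1 = 2 * (a' + b') + 1 by omega,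
      show 2 * b' + 1 - 1 = 2 * b' by omega, show 2 * a' + 1 - 1 = 2 * a' by omega,
      SA_odd, SA_even, SA_even, SB_odd, SB_even, SB_even]
    have e1 : ((2 * a' + 1 + (2 * b' + 1)).factorial : ℚ)
        = (2 * a' + 2 * b' + 2) * (2 * (a' + b') + 1).factorial := by
      rw [show 2 * a' + 1 + (2 * b' + 1) = (2 * (a' + b') + 1) + 1 by omega,
        Nat.factorial_succ]; push_cast; ring
    have h3 : ((2 * (a' + b') + 1).factorial : ℚ) ≠ 0 :=
      Nat.cast_ne_zero.mpr (Nat.factorial_ne_zero _)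
    have h4 : ((2 * a' + 1).factorial : ℚ) ≠ 0 := Nat.cast_ne_zero.mpr (Nat.factorial_ne_zero _)
    have h5 : ((2 * b' + 1).factorial : ℚ) ≠ 0 := Nat.cast_ne_zero.mpr (Nat.factorial_ne_zero _)
    refine hX _ _ _ _ ?_ ?_ <;>
    · rw [e1]
      push_cast
      field_simp
      ring
  · rintro ⟨⟨a, ha⟩, ⟨b, hb⟩⟩
    obtain ⟨a', rfl⟩ : ∃ a', n = 2 * a' + 2 := ⟨a - 1, by omega⟩
    obtain ⟨b', rfl⟩ : ∃ b', m = 2 * b' + 1 := ⟨b, by omega⟩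
    rw [hmain, shape2]
    rw [show 2 * a' + 2 + (2 * b' + 1) - 1 = 2 * (a' + b' + 1) by omega,
      show 2 * b' + 1 - 1 = 2 * b' by omega, show 2 * a' + 2 - 1 = 2 * a' + 1 by omega,
      SA_even, SA_even, SA_odd, SB_even, SB_even, SB_odd]
    have e2 : ((2 * a' + 2).factorial : ℚ) = (2 * a' + 2) * (2 * a' + 1).factorial := by
      rw [show 2 * a' + 2 = (2 * a' + 1) + 1 by omega, Nat.factorial_succ]; push_cast; ring
    have h3 : ((2 * (a' + b' + 1)).factorial : ℚ) ≠ 0 :=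
      Nat.cast_ne_zero.mpr (Nat.factorial_ne_zero _)
    have h4 : ((2 * a' + 1).factorial : ℚ) ≠ 0 := Nat.cast_ne_zero.mpr (Nat.factorial_ne_zero _)
    have h5 : ((2 * b' + 1).factorial : ℚ) ≠ 0 := Nat.cast_ne_zero.mpr (Nat.factorial_ne_zero _)
    refine hX _ _ _ _ ?_ ?_ <;>
    · rw [e2]
      push_cast
      field_simp
      ring
  · rintro ⟨⟨a, ha⟩, ⟨b, hb⟩⟩
    obtain ⟨a', rfl⟩ : ∃ a', n = 2 * a' + 1 := ⟨a, by omega⟩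
    obtain ⟨b', rfl⟩ : ∃ b', m = 2 * b' + 2 := ⟨b - 1, by omega⟩
    rw [hmain, shape2]
    rw [show 2 * a' + 1 + (2 * b' + 2) - 1 = 2 * (a' + b' + 1) by omega,
      show 2 * b' + 2 - 1 = 2 * b' + 1 by omega, show 2 * a' + 1 - 1 = 2 * a' by omega,
      SA_even, SA_odd, SA_even, SB_even, SB_odd, SB_even]
    have e3 : ((2 * b' + 2).factorial : ℚ) = (2 * b' + 2) * (2 * b' + 1).factorial := by
      rw [show 2 * b' + 2 = (2 * b' + 1) + 1 by omega, Nat.factorial_succ]; push_cast; ring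
    have h3 : ((2 * (a' + b' + 1)).factorial : ℚ) ≠ 0 :=
      Nat.cast_ne_zero.mpr (Nat.factorial_ne_zero _)
    have h4 : ((2 * a' + 1).factorial : ℚ) ≠ 0 := Nat.cast_ne_zero.mpr (Nat.factorial_ne_zero _)
    have h5 : ((2 * b' + 1).factorial : ℚ) ≠ 0 := Nat.cast_ne_zero.mpr (Nat.factorial_ne_zero _)
    refine hX _ _ _ _ ?_ ?_ <;>
    · rw [e3]
      push_cast
      field_simp
      ring
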